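/- Let f : Finset E → ℝ be monotone submodular with f(∅) = 0, and let G_m be the greedy solution of size m and OPT an optimal solution of size m (as in the standard greedy setting). Then f(G_m) ≥ (1 - (1 - 1/m)^m)·f(OPT) ≥ (1 - 1/e)·f(OPT); in particular f(G_m) ≥ (1/2)·f(OPT). -/
import Mathlib

/-- Submodularity telescoping: the gain of adding a whole set is at most the
sum of individual marginal gains. -/
lemma submod_union_sum_bound {E : Type*} [Fintype E] [DecidableEq E]
    (f : Finset E → ℝ)
    (hmono : ∀ A B : Finset E, A ⊆ B → f A ≤ f B)
    (hsubmod : ∀ A B : Finset E, A ⊆ B → ∀ x ∉ B,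
      f (insert x B) - f B ≤ f (insert x A) - f A)
    (A S : Finset E) :
    f (A ∪ S) - f A ≤ ∑ x ∈ S, (f (insert x A) - f A) := by
  classical
  induction S using Finset.induction_on with
  | empty => simp
  | @insert y S' hy ih =>
    rw [Finset.sum_insert hy, Finset.union_insert]
    by_cases h : y ∈ A ∪ S'
    · rw [Finset.insert_eq_self.mpr h]
      have h1 : f A ≤ f (insert y A) := hmono _ _ (Finset.subset_insert _ _)
      linarith
    · have h2 := hsubmod A (A ∪ S') Finset.subset_union_left y h
      linarith

/-- Standard greedy guarantee for monotone submodular maximization: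
`f(G_m) ≥ (1 - (1 - 1/m)^m)·f(OPT) ≥ (1 - 1/e)·f(OPT) ≥ (1/2)·f(OPT)`. -/
theorem greedy_one_minus_inv_e_approximation {E : Type*} [Fintype E] [DecidableEq E]
    (f : Finset E → ℝ)
    (hmono : ∀ A B : Finset E, A ⊆ B → f A ≤ f B)
    (hsubmod : ∀ A B : Finset E, A ⊆ B → ∀ x ∉ B,
      f (insert x B) - f B ≤ f (insert x A) - f A)
    (hempty : f ∅ = 0)
    (m : ℕ) (hm : 1 ≤ m) (g : ℕ → E) (G : ℕ → Finset E)
    (hG0 : G 0 = ∅) (hGs : ∀ i, G (i + 1) = insert (g i) (G i))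
    (hgreedy : ∀ i, ∀ x : E, f (insert x (G i)) - f (G i) ≤ f (G (i + 1)) - f (G i))
    (OPT : Finset E) (hcard : OPT.card = m)
    (hopt : ∀ A : Finset E, A.card = m → f A ≤ f OPT) :
    f (G m) ≥ (1 - (1 - 1 / (m : ℝ)) ^ m) * f OPT ∧
    f (G m) ≥ (1 - 1 / Real.exp 1) * f OPT ∧
    f (G m) ≥ (1 / 2) * f OPT := by
  have hm0 : (0:ℝ) < (m:ℝ) := by exact_mod_cast hm
  set c : ℝ := 1 - 1 / (m:ℝ) with hc_def
  clear_value c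
  have hc0 : 0 ≤ c := by
    have : 1 / (m:ℝ) ≤ 1 := by
      rw [div_le_one hm0]; exact_mod_cast hm
    linarith
  -- per-step bound
  have key : ∀ i, f OPT - f (G i) ≤ (m:ℝ) * (f (G (i+1)) - f (G i)) := by
    intro i
    have h1 : f OPT ≤ f (G i ∪ OPT) := hmono _ _ Finset.subset_union_right
    have h2 := submod_union_sum_bound f hmono hsubmod (G i) OPT
    have h3 : ∑ x ∈ OPT, (f (insert x (G i)) - f (G i)) ≤
        (m:ℝ) * (f (G (i+1)) - f (G i)) := by
      calc ∑ x ∈ OPT, (f (insert x (G i)) - f (G i))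
          ≤ OPT.card • (f (G (i+1)) - f (G i)) :=
            Finset.sum_le_card_nsmul _ _ _ (fun x _ => hgreedy i x)
        _ = (m:ℝ) * (f (G (i+1)) - f (G i)) := by
            rw [hcard, nsmul_eq_mul]
    linarith
  have hdelta : ∀ i, f OPT - f (G i) ≤ c ^ i * f OPT := by
    intro i
    induction i with
    | zero => simp [hG0, hempty]
    | succ i ih =>
      have hk := key i
      have hgain : (f OPT - f (G i)) / (m:ℝ) ≤ f (G (i+1)) - f (G i) := by
        rw [div_le_iff₀ hm0]; linarith
      have step : f OPT - f (G (i+1)) ≤ c * (f OPT - f (G i)) := by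
        have : c * (f OPT - f (G i)) =
            (f OPT - f (G i)) - (f OPT - f (G i)) / (m:ℝ) := by
          rw [hc_def]; ring
        linarith
      calc f OPT - f (G (i+1)) ≤ c * (f OPT - f (G i)) := step
        _ ≤ c * (c ^ i * f OPT) := mul_le_mul_of_nonneg_left ih hc0
        _ = c ^ (i+1) * f OPT := by ring
  have hOPT0 : 0 ≤ f OPT := by
    have := hmono ∅ OPT (Finset.empty_subset _)
    linarith [hempty ▸ this]
  have main : f (G m) ≥ (1 - c ^ m) * f OPT := by
    have := hdelta m
    nlinarith
  have hcm_exp : c ^ m ≤ 1 / Real.exp 1 := by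
    have h1 : c ≤ Real.exp (-(1 / (m:ℝ))) := by
      have := Real.add_one_le_exp (-(1 / (m:ℝ)))
      rw [hc_def]; linarith
    have h2 : c ^ m ≤ Real.exp (-(1 / (m:ℝ))) ^ m := pow_le_pow_left₀ hc0 h1 m
    have h3 : Real.exp (-(1 / (m:ℝ))) ^ m = Real.exp ((m:ℝ) * (-(1 / (m:ℝ)))) :=
      (Real.exp_nat_mul _ m).symm
    have h4 : (m:ℝ) * (-(1 / (m:ℝ))) = -1 := by
      field_simp
    rw [h3, h4, Real.exp_neg] at h2
    rw [one_div]
    exact h2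
  have hexp_half : 1 / Real.exp 1 ≤ 1 / 2 := by
    have h := Real.exp_one_gt_d9
    rw [div_le_div_iff₀ (Real.exp_pos 1) (by norm_num)]
    nlinarith
  refine ⟨main, ?_, ?_⟩
  · nlinarith [mul_le_mul_of_nonneg_right hcm_exp hOPT0]
  · nlinarith [mul_le_mul_of_nonneg_right (hcm_exp.trans hexp_half) hOPT0]
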